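/- For every integer k ≥ 2 and every d ∈ (0,1): if n ≥ (2/d)^{2k-4} and 0 < ρ ≤ (d/2)^{2k-4}, then every 2-coloring of the edges of an n-vertex (ρ,d)-dense graph Γ contains a monochromatic copy of K_k. -/

import Mathlib

open Classical in
/-- The number of edges of `Γ` with both endpoints in `U`. -/
noncomputable def edgesWithin {V : Type*} [Fintype V] (Γ : SimpleGraph V) (U : Finset V) : ℕ :=
  ((Finset.univ : Finset (Sym2 V)).filter (fun e => e ∈ Γ.edgeSet ∧ ∀ x ∈ e, x ∈ U)).card

/-- A graph `Γ` on `n` vertices is `(ρ,d)`-dense if every induced subgraph on `m ≥ ρn`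
vertices contains at least `d·m²/2` edges. -/
def RhoDDense {V : Type*} [Fintype V] (Γ : SimpleGraph V) (ρ d : ℝ) : Prop :=
  ∀ U : Finset V, ρ * (Fintype.card V : ℝ) ≤ (U.card : ℝ) →
    d * (U.card : ℝ) ^ 2 / 2 ≤ (edgesWithin Γ U : ℝ)

/-- A sequence `v_1, …, v_ℓ` of distinct, pairwise adjacent vertices of `Γ` is canonical for
the edge `2`-coloring `c` if for each `i` all "forward" edges `{v_i, v_j}`, `j > i`, have the
same color. -/
def Canonical {V : Type*} (Γ : SimpleGraph V) (c : Sym2 V → Fin 2) (ℓ : ℕ)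
    (v : Fin ℓ → V) : Prop :=
  Function.Injective v ∧ (∀ i j, i ≠ j → Γ.Adj (v i) (v j)) ∧
    ∀ i j j' : Fin ℓ, i < j → i < j' → c s(v i, v j) = c s(v i, v j')

open Classical in
lemma edgesWithin_handshake {V : Type*} [Fintype V] (Γ : SimpleGraph V) (U : Finset V) :
    ∑ v ∈ U, ((U.filter (fun w => Γ.Adj v w)).card) = 2 * edgesWithin Γ U := by
  classical
  let G : SimpleGraph V :=
    { Adj := fun x y => Γ.Adj x y ∧ x ∈ U ∧ y ∈ U
      symm := ⟨fun x y ⟨h, hx, hy⟩ => ⟨h.symm, hy, hx⟩⟩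
      loopless := ⟨fun x ⟨h, _⟩ => Γ.loopless.irrefl x h⟩ }
  have hedge : G.edgeFinset.card = edgesWithin Γ U := by
    rw [edgesWithin]
    congr 1
    ext e
    induction e using Sym2.ind with
    | _ a b =>
      simp only [SimpleGraph.mem_edgeFinset, SimpleGraph.mem_edgeSet, Finset.mem_filter,
        Finset.mem_univ, true_and, Sym2.mem_iff, G]
      constructor
      · rintro ⟨h, ha, hb⟩
        exact ⟨h, by rintro x (rfl | rfl) <;> assumption⟩
      · rintro ⟨h, hU⟩
        exact ⟨h, hU a (Or.inl rfl), hU b (Or.inr rfl)⟩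
  have hdeg : ∀ v ∈ U, G.degree v = (U.filter (fun w => Γ.Adj v w)).card := by
    intro v hv
    rw [SimpleGraph.degree, SimpleGraph.neighborFinset_eq_filter]
    congr 1
    ext w
    simp only [Finset.mem_filter, Finset.mem_univ, true_and, G]
    tauto
  have hdeg0 : ∀ v ∉ U, G.degree v = 0 := by
    intro v hv
    rw [SimpleGraph.degree, SimpleGraph.neighborFinset_eq_filter]
    simp only [Finset.card_eq_zero, Finset.filter_eq_empty_iff]
    intro w _
    exact fun ⟨_, hvU, _⟩ => hv hvU
  have h := SimpleGraph.sum_degrees_eq_twice_card_edges G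
  rw [← hedge, ← h]
  rw [← Finset.sum_subset (Finset.subset_univ U) (fun v _ hv => hdeg0 v hv)]
  exact Finset.sum_congr rfl (fun v hv => (hdeg v hv).symm)

open Classical in
lemma build_aux {n : ℕ} (Γ : SimpleGraph (Fin n)) (c : Sym2 (Fin n) → Fin 2)
    (d ρ : ℝ) (hd0 : 0 < d) (hd1 : d < 1) (m : ℕ)
    (hn : (2 / d) ^ m ≤ (n : ℝ)) (hρ0 : 0 < ρ) (hρ : ρ ≤ (d / 2) ^ m)
    (hΓ : RhoDDense Γ ρ d) :
    ∀ t, t ≤ m → ∃ (U s : Finset (Fin n)) (f : Fin n → Fin 2),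
      Disjoint s U ∧ s.card = t ∧ (d / 2) ^ t * (n : ℝ) ≤ (U.card : ℝ) ∧
      (∀ v ∈ s, ∀ w ∈ U, Γ.Adj v w ∧ c s(v, w) = f v) ∧
      (∀ v ∈ s, ∀ w ∈ s, v ≠ w → Γ.Adj v w ∧ (c s(v, w) = f v ∨ c s(v, w) = f w)) := by
  have hd2 : (0:ℝ) < d / 2 := by linarith
  have hd2' : d / 2 ≤ 1 := by linarith
  have hpow : ∀ t, t ≤ m → (d / 2) ^ m ≤ (d / 2) ^ t := fun t ht =>
    pow_le_pow_of_le_one hd2.le hd2' ht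
  have hn0 : (0:ℝ) ≤ (n : ℝ) := Nat.cast_nonneg n
  have hone : ∀ t, t ≤ m → (1:ℝ) ≤ (d / 2) ^ t * n := by
    intro t ht
    have h1 : (d / 2) ^ m * (2 / d) ^ m ≤ (d / 2) ^ m * n :=
      mul_le_mul_of_nonneg_left hn (by positivity)
    have h2 : (d / 2) ^ m * (2 / d) ^ m = 1 := by
      rw [← mul_pow]
      rw [show (d/2) * (2/d) = 1 by field_simp, one_pow]
    have h3 : (d / 2) ^ m * n ≤ (d / 2) ^ t * n :=
      mul_le_mul_of_nonneg_right (hpow t ht) hn0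
    linarith
  intro t
  induction t with
  | zero =>
    intro _
    refine ⟨Finset.univ, ∅, fun _ => 0, Finset.disjoint_empty_left _, rfl, ?_, ?_, ?_⟩
    · simp [Finset.card_univ]
    · simp
    · simp
  | succ t ih =>
    intro ht
    obtain ⟨U, s, f, hdisj, hcard, hU, hfor, hpair⟩ := ih (Nat.le_of_succ_le ht)
    have htm : t ≤ m := Nat.le_of_succ_le ht
    -- U is big enough for density
    have hρn : ρ * n ≤ (U.card : ℝ) := by
      have : ρ * n ≤ (d / 2) ^ t * n := by
        apply mul_le_mul_of_nonneg_right _ hn0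
        exact le_trans hρ (hpow t htm)
      simpa [Fintype.card_fin] using le_trans this hU
    have hdens := hΓ U (by simpa [Fintype.card_fin] using hρn)
    have hU1 : (1:ℝ) ≤ (U.card : ℝ) := le_trans (hone t htm) hU
    have hUne : U.Nonempty := by
      rw [← Finset.card_pos]
      exact_mod_cast lt_of_lt_of_le zero_lt_one hU1
    -- find a vertex of large degree
    have hhs := edgesWithin_handshake Γ U
    have hhsR : ∑ v ∈ U, ((U.filter (fun w => Γ.Adj v w)).card : ℝ)
        = 2 * (edgesWithin Γ U : ℝ) := by exact_mod_cast hhs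
    have hsum : d * (U.card : ℝ) ^ 2 ≤ ∑ v ∈ U, ((U.filter (fun w => Γ.Adj v w)).card : ℝ) := by
      rw [hhsR]; linarith
    have hex : ∃ v ∈ U, d * (U.card : ℝ) ≤ ((U.filter (fun w => Γ.Adj v w)).card : ℝ) := by
      by_contra hall
      push_neg at hall
      have := Finset.sum_lt_sum_of_nonempty hUne hall
      have h2 : ∑ _v ∈ U, d * (U.card : ℝ) = d * (U.card : ℝ)^2 := by
        rw [Finset.sum_const, nsmul_eq_mul]; ring
      rw [h2] at this
      linarith
    obtain ⟨v, hvU, hvdeg⟩ := hex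
    set N := U.filter (fun w => Γ.Adj v w) with hN
    -- majority color
    have hsplit : (N.filter (fun w => c s(v, w) = 0)).card
        + (N.filter (fun w => ¬ c s(v, w) = 0)).card = N.card :=
      Finset.card_filter_add_card_filter_not _
    have hmaj : ∃ i : Fin 2, (N.card : ℝ) / 2 ≤ ((N.filter (fun w => c s(v, w) = i)).card : ℝ) := by
      by_cases hc : N.card ≤ 2 * (N.filter (fun w => c s(v, w) = 0)).card
      · refine ⟨0, ?_⟩
        have := (Nat.cast_le (α := ℝ)).2 hc
        push_cast at this ⊢
        linarith
      · refine ⟨1, ?_⟩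
        have he : N.filter (fun w => ¬ c s(v, w) = 0) = N.filter (fun w => c s(v, w) = 1) := by
          apply Finset.filter_congr
          intro w _
          constructor
          · intro h
            have := (c s(v, w)).isLt
            omega
          · intro h; rw [h]; decide
        rw [he] at hsplit
        push_neg at hc
        have h3 : N.card ≤ 2 * (N.filter (fun w => c s(v, w) = 1)).card := by omega
        have := (Nat.cast_le (α := ℝ)).2 h3
        push_cast at this ⊢
        linarith
    obtain ⟨i, hi⟩ := hmaj
    set U' := N.filter (fun w => c s(v, w) = i) with hU'
    have hU'sub : U' ⊆ U := (Finset.filter_subset _ _).trans (Finset.filter_subset _ _)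
    have hU'adj : ∀ w ∈ U', Γ.Adj v w ∧ c s(v, w) = i := by
      intro w hw
      rw [hU', Finset.mem_filter] at hw
      exact ⟨(Finset.mem_filter.1 hw.1).2, hw.2⟩
    have hvnotU' : v ∉ U' := fun h => Γ.loopless.irrefl v (hU'adj v h).1
    have hvnots : v ∉ s := Finset.disjoint_right.1 hdisj hvU
    refine ⟨U', insert v s, Function.update f v i, ?_, ?_, ?_, ?_, ?_⟩
    · rw [Finset.disjoint_left]
      intro a ha haU'
      rcases Finset.mem_insert.1 ha with rfl | has
      · exact hvnotU' haU'
      · exact Finset.disjoint_left.1 hdisj has (hU'sub haU')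
    · rw [Finset.card_insert_of_notMem hvnots, hcard]
    · have : (d / 2) ^ (t + 1) * n = (d / 2) * ((d / 2) ^ t * n) := by ring
      rw [this]
      calc (d / 2) * ((d / 2) ^ t * n) ≤ (d / 2) * (U.card : ℝ) :=
            mul_le_mul_of_nonneg_left hU hd2.le
        _ = (d * (U.card : ℝ)) / 2 := by ring
        _ ≤ (N.card : ℝ) / 2 := by linarith
        _ ≤ (U'.card : ℝ) := hi
    · intro v' hv' w hw
      rcases Finset.mem_insert.1 hv' with rfl | hv's
      · exact ⟨(hU'adj w hw).1, by rw [Function.update_self]; exact (hU'adj w hw).2⟩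
      · have hne : v' ≠ v := fun h => hvnots (h ▸ hv's)
        rw [Function.update_of_ne hne]
        exact hfor v' hv's w (hU'sub hw)
    · have hvs : ∀ b ∈ s, Γ.Adj v b ∧ c s(v, b) = Function.update f v i b := by
        intro b hbs
        have h1 := hfor b hbs v hvU
        have hbv : b ≠ v := ne_of_mem_of_not_mem hbs hvnots
        rw [Function.update_of_ne hbv, Sym2.eq_swap]
        exact ⟨h1.1.symm, h1.2⟩
      intro a ha b hb hab
      rcases Finset.mem_insert.1 ha with rfl | has <;>
        rcases Finset.mem_insert.1 hb with rfl | hbs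
      · exact absurd rfl hab
      · exact ⟨(hvs b hbs).1, Or.inr (hvs b hbs).2⟩
      · exact ⟨(hvs a has).1.symm, Or.inl (by rw [Sym2.eq_swap]; exact (hvs a has).2)⟩
      · have h1 := hpair a has b hbs hab
        rw [Function.update_of_ne (ne_of_mem_of_not_mem has hvnots),
          Function.update_of_ne (ne_of_mem_of_not_mem hbs hvnots)]
        exact h1

open Classical in
/-- For every integer `k ≥ 2` and every `d ∈ (0,1)`: if `n ≥ (2/d)^(2k-4)` and
`0 < ρ ≤ (d/2)^(2k-4)`, then every `2`-coloring of the edges of an `n`-vertex `(ρ,d)`-dense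
graph `Γ` contains a monochromatic copy of `K_k`. -/
theorem stmt7 (k : ℕ) (hk : 2 ≤ k) (d : ℝ) (hd0 : 0 < d) (hd1 : d < 1) (n : ℕ)
    (hn : (2 / d) ^ (2 * k - 4) ≤ (n : ℝ)) (ρ : ℝ) (hρ0 : 0 < ρ)
    (hρ : ρ ≤ (d / 2) ^ (2 * k - 4)) (Γ : SimpleGraph (Fin n)) (hΓ : RhoDDense Γ ρ d)
    (c : Sym2 (Fin n) → Fin 2) :
    ∃ i : Fin 2, ∃ t : Finset (Fin n), t.card = k ∧
      (∀ x ∈ t, ∀ y ∈ t, x ≠ y → Γ.Adj x y) ∧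
      ∀ x ∈ t, ∀ y ∈ t, x ≠ y → c s(x, y) = i := by
  set m := 2 * k - 4 with hm
  obtain ⟨U, s, f, hdisj, hcard, hU, hfor, hpair⟩ :=
    build_aux Γ c d ρ hd0 hd1 m hn hρ0 hρ hΓ m le_rfl
  have hd2 : (0:ℝ) < d / 2 := by linarith
  have hn0 : (0:ℝ) ≤ (n : ℝ) := Nat.cast_nonneg n
  have hone : (1:ℝ) ≤ (d / 2) ^ m * n := by
    have h2 : (d / 2) ^ m * (2 / d) ^ m = 1 := by
      rw [← mul_pow, show (d/2) * (2/d) = 1 by field_simp, one_pow]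
    have h1 : (d / 2) ^ m * (2 / d) ^ m ≤ (d / 2) ^ m * n :=
      mul_le_mul_of_nonneg_left hn (by positivity)
    linarith
  have hU1 : (1:ℝ) ≤ (U.card : ℝ) := le_trans hone hU
  have hρn : ρ * (Fintype.card (Fin n) : ℝ) ≤ (U.card : ℝ) := by
    rw [Fintype.card_fin]
    have : ρ * n ≤ (d / 2) ^ m * n := mul_le_mul_of_nonneg_right hρ hn0
    linarith
  have hdens := hΓ U hρn
  have hpos : 0 < edgesWithin Γ U := by
    have hsq : (1:ℝ) ≤ (U.card : ℝ) ^ 2 := by nlinarith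
    have : (0:ℝ) < (edgesWithin Γ U : ℝ) := by nlinarith
    exact_mod_cast this
  unfold edgesWithin at hpos
  rw [Finset.filter_congr_decidable] at hpos
  obtain ⟨e, he⟩ := Finset.card_pos.1 hpos
  obtain ⟨heE, heU⟩ := (Finset.mem_filter.1 he).2
  obtain ⟨⟨a, b⟩, rfl⟩ := e.exists_rep
  have hadj : Γ.Adj a b := heE
  have haU : a ∈ U := heU a (Sym2.mem_mk_left a b)
  have hbU : b ∈ U := heU b (Sym2.mem_mk_right a b)
  have hans : a ∉ s := Finset.disjoint_right.1 hdisj haU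
  have hbns : b ∉ s := Finset.disjoint_right.1 hdisj hbU
  set f₁ := Function.update f a (c s(a, b)) with hf₁
  set s₁ := insert a s with hs₁
  have hcard₁ : s₁.card = 2 * k - 3 := by
    rw [hs₁, Finset.card_insert_of_notMem hans, hcard]
    omega
  have hbns₁ : b ∉ s₁ := by
    rw [hs₁, Finset.mem_insert]
    rintro (rfl | h)
    · exact Γ.loopless.irrefl b hadj
    · exact hbns h
  have hfor₁ : ∀ v ∈ s₁, Γ.Adj v b ∧ c s(v, b) = f₁ v := by
    intro v hv
    rcases Finset.mem_insert.1 hv with rfl | hvs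
    · exact ⟨hadj, by rw [hf₁, Function.update_self]⟩
    · rw [hf₁, Function.update_of_ne (ne_of_mem_of_not_mem hvs hans)]
      exact hfor v hvs b hbU
  have hva : ∀ w ∈ s, Γ.Adj a w ∧ c s(a, w) = f₁ w := by
    intro w hw
    have h1 := hfor w hw a haU
    rw [hf₁, Function.update_of_ne (ne_of_mem_of_not_mem hw hans), Sym2.eq_swap]
    exact ⟨h1.1.symm, h1.2⟩
  have hpair₁ : ∀ v ∈ s₁, ∀ w ∈ s₁, v ≠ w →
      Γ.Adj v w ∧ (c s(v, w) = f₁ v ∨ c s(v, w) = f₁ w) := by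
    intro v hv w hw hvw
    rcases Finset.mem_insert.1 hv with rfl | hvs <;>
      rcases Finset.mem_insert.1 hw with rfl | hws
    · exact absurd rfl hvw
    · exact ⟨(hva w hws).1, Or.inr (hva w hws).2⟩
    · exact ⟨(hva v hvs).1.symm, Or.inl (by rw [Sym2.eq_swap]; exact (hva v hvs).2)⟩
    · have h1 := hpair v hvs w hws hvw
      rw [hf₁, Function.update_of_ne (ne_of_mem_of_not_mem hvs hans),
        Function.update_of_ne (ne_of_mem_of_not_mem hws hans)]
      exact h1
  -- pigeonhole
  have hmaj : ∃ i : Fin 2, k - 1 ≤ (s₁.filter (fun v => f₁ v = i)).card := by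
    have hsplit : (s₁.filter (fun v => f₁ v = 0)).card
        + (s₁.filter (fun v => ¬ f₁ v = 0)).card = s₁.card :=
      Finset.card_filter_add_card_filter_not _
    have he : s₁.filter (fun v => ¬ f₁ v = 0) = s₁.filter (fun v => f₁ v = 1) := by
      apply Finset.filter_congr
      intro w _
      constructor
      · intro h
        have := (f₁ w).isLt
        omega
      · intro h; rw [h]; decide
    rw [he] at hsplit
    by_cases hc : k - 1 ≤ (s₁.filter (fun v => f₁ v = 0)).card
    · exact ⟨0, hc⟩
    · exact ⟨1, by omega⟩
  obtain ⟨i, hile⟩ := hmaj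
  obtain ⟨s₃, hsub, hs₃card⟩ := Finset.exists_subset_card_eq hile
  have hs₃s₁ : s₃ ⊆ s₁ := hsub.trans (Finset.filter_subset _ _)
  have hfi : ∀ x ∈ s₃, f₁ x = i := fun x hx => (Finset.mem_filter.1 (hsub hx)).2
  have hbns₃ : b ∉ s₃ := fun h => hbns₁ (hs₃s₁ h)
  refine ⟨i, insert b s₃, ?_, ?_, ?_⟩
  · rw [Finset.card_insert_of_notMem hbns₃, hs₃card]
    omega
  · intro x hx y hy hxy
    rcases Finset.mem_insert.1 hx with rfl | hxs <;>
      rcases Finset.mem_insert.1 hy with rfl | hys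
    · exact absurd rfl hxy
    · exact (hfor₁ y (hs₃s₁ hys)).1.symm
    · exact (hfor₁ x (hs₃s₁ hxs)).1
    · exact (hpair₁ x (hs₃s₁ hxs) y (hs₃s₁ hys) hxy).1
  · intro x hx y hy hxy
    rcases Finset.mem_insert.1 hx with rfl | hxs <;>
      rcases Finset.mem_insert.1 hy with rfl | hys
    · exact absurd rfl hxy
    · rw [Sym2.eq_swap, (hfor₁ y (hs₃s₁ hys)).2, hfi y hys]
    · rw [(hfor₁ x (hs₃s₁ hxs)).2, hfi x hxs]
    · rcases (hpair₁ x (hs₃s₁ hxs) y (hs₃s₁ hys) hxy).2 with h | h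
      · rw [h, hfi x hxs]
      · rw [h, hfi y hys]
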